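/- For $0 < q < 1$, the sequence $v_n = (-1)^n q^{n^2 - n/2}/(q;q)_n$ satisfies $\sum_{n=0}^\infty s_{m+n} v_n = 0$ for every $m \geq 0$, where $s_n = q^{-n^2/2}$; moreover the series is absolutely convergent, with $\sum_{n=0}^\infty s_{m+n}|v_n| = q^{-m^2/2}(-q^{-m};q)_\infty < \infty$. -/

import Mathlib

set_option maxHeartbeats 1000000

open Real Filter Finset

namespace Stmt15Aux

noncomputable def Pq (q : ℝ) (n : ℕ) : ℝ := ∏ j ∈ Finset.range n, (1 - q ^ (j + 1))

noncomputable def aq (q : ℝ) (n : ℕ) : ℝ := q ^ (((n : ℝ) * ((n : ℝ) - 1)) / 2) / Pq q n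

lemma Pq_pos {q : ℝ} (hq0 : 0 < q) (hq1 : q < 1) (n : ℕ) : 0 < Pq q n := by
  refine Finset.prod_pos fun j _ => ?_
  have : q ^ (j + 1) < 1 := pow_lt_one₀ hq0.le hq1 (Nat.succ_ne_zero j)
  linarith

lemma Pq_succ (q : ℝ) (n : ℕ) : Pq q (n + 1) = Pq q n * (1 - q ^ (n + 1)) :=
  Finset.prod_range_succ _ _

lemma aq_pos {q : ℝ} (hq0 : 0 < q) (hq1 : q < 1) (n : ℕ) : 0 < aq q n :=
  div_pos (Real.rpow_pos_of_pos hq0 _) (Pq_pos hq0 hq1 n)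

lemma aq_zero (q : ℝ) : aq q 0 = 1 := by
  simp [aq, Pq]

lemma one_sub_ge {q : ℝ} (hq0 : 0 < q) (hq1 : q < 1) (n : ℕ) :
    1 - q ≤ 1 - q ^ (n + 1) := by
  have h := pow_le_pow_of_le_one hq0.le hq1.le (show 1 ≤ n + 1 by omega)
  rw [pow_one] at h
  linarith

lemma aq_rec {q : ℝ} (hq0 : 0 < q) (hq1 : q < 1) (n : ℕ) :
    aq q n * q ^ n = aq q (n + 1) * (1 - q ^ (n + 1)) := by
  have hP := Pq_pos hq0 hq1 n
  have h1 : q ^ (n + 1) < 1 := pow_lt_one₀ hq0.le hq1 (Nat.succ_ne_zero n)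
  have h1' : (1 : ℝ) - q ^ (n + 1) ≠ 0 := by linarith
  unfold aq
  rw [Pq_succ, div_mul_eq_mul_div, ← Real.rpow_natCast q n, ← Real.rpow_add hq0]
  rw [show ((n : ℝ) * ((n : ℝ) - 1)) / 2 + (n : ℝ)
      = (((n + 1 : ℕ) : ℝ) * (((n + 1 : ℕ) : ℝ) - 1)) / 2 by push_cast; ring]
  field_simp

lemma summable_aq {q : ℝ} (hq0 : 0 < q) (hq1 : q < 1) (z : ℝ) :
    Summable fun n => aq q n * z ^ n := by
  apply summable_of_ratio_norm_eventually_le (r := 1 / 2) (by norm_num)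
  have hq' : (0:ℝ) < 1 - q := by linarith
  have htend : Tendsto (fun n : ℕ => q ^ n * |z|) atTop (nhds 0) := by
    simpa using (tendsto_pow_atTop_nhds_zero_of_lt_one hq0.le hq1).mul_const |z|
  have hev : ∀ᶠ n : ℕ in atTop, q ^ n * |z| ≤ (1 - q) / 2 :=
    htend.eventually_le_const (by linarith)
  filter_upwards [hev] with n hn
  have hP := Pq_pos hq0 hq1 n
  have han := aq_pos hq0 hq1 n
  have hans := aq_pos hq0 hq1 (n + 1)
  have h1 : (0:ℝ) < 1 - q ^ (n + 1) := lt_of_lt_of_le hq' (one_sub_ge hq0 hq1 n)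
  have hrec := aq_rec hq0 hq1 n
  have key : aq q (n + 1) * |z| ≤ (1 / 2) * aq q n := by
    have heq : aq q (n + 1) = aq q n * q ^ n / (1 - q ^ (n + 1)) := by
      field_simp
      linarith [hrec]
    rw [heq, div_mul_eq_mul_div, div_le_iff₀ h1]
    have h2 : aq q n * q ^ n * |z| ≤ aq q n * ((1 - q) / 2) := by
      have := mul_le_mul_of_nonneg_left hn han.le
      calc aq q n * q ^ n * |z| = aq q n * (q ^ n * |z|) := by ring
        _ ≤ aq q n * ((1 - q) / 2) := this
    calc aq q n * q ^ n * |z| ≤ aq q n * ((1 - q) / 2) := h2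
      _ ≤ 1 / 2 * aq q n * (1 - q ^ (n + 1)) := by nlinarith [one_sub_ge hq0 hq1 n]
  have hnorm : ‖aq q (n + 1) * z ^ (n + 1)‖ = aq q (n + 1) * |z| * |z ^ n| := by
    rw [Real.norm_eq_abs, abs_mul, abs_of_pos hans, pow_succ, abs_mul]
    ring
  rw [hnorm, norm_mul, Real.norm_eq_abs, Real.norm_eq_abs, abs_of_pos han]
  have hzn : (0:ℝ) ≤ |z ^ n| := abs_nonneg _
  calc aq q (n + 1) * |z| * |z ^ n| ≤ 1 / 2 * aq q n * |z ^ n| :=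
        mul_le_mul_of_nonneg_right key hzn
    _ = 1 / 2 * (aq q n * |z ^ n|) := by ring

noncomputable def Fq (q : ℝ) (z : ℝ) : ℝ := ∑' n, aq q n * z ^ n

lemma hasSum_Fq {q : ℝ} (hq0 : 0 < q) (hq1 : q < 1) (z : ℝ) :
    HasSum (fun n => aq q n * z ^ n) (Fq q z) :=
  (summable_aq hq0 hq1 z).hasSum

lemma funeq {q : ℝ} (hq0 : 0 < q) (hq1 : q < 1) (z : ℝ) :
    Fq q z = (1 + z) * Fq q (q * z) := by
  have h1 := hasSum_Fq hq0 hq1 (q * z)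
  have h2 : HasSum (fun n => aq q n * (q * z) ^ n * z) (Fq q (q * z) * z) := h1.mul_right z
  set f : ℕ → ℝ := fun n => if n = 0 then 0 else aq q (n - 1) * (q * z) ^ (n - 1) * z with hf
  have h3 : HasSum (fun n => f (n + 1)) (Fq q (q * z) * z) := by
    refine h2.congr_fun fun n => ?_
    simp [hf]
  have h4 : HasSum f (Fq q (q * z) * z) := by
    have := (hasSum_nat_add_iff (f := f) 1).mp h3
    simpa [hf] using this
  have h5 := h1.add h4
  have h6 : HasSum (fun n => aq q n * z ^ n) (Fq q (q * z) + Fq q (q * z) * z) := by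
    refine h5.congr_fun fun n => ?_
    cases n with
    | zero => simp [hf]
    | succ k =>
      simp only [hf, Nat.succ_ne_zero, if_false, Nat.add_sub_cancel]
      have hrec := aq_rec hq0 hq1 k
      rw [mul_pow]
      linear_combination (-(z ^ k * z)) * hrec
  have := (hasSum_Fq hq0 hq1 z).unique h6
  rw [this]; ring

lemma funeq_iter {q : ℝ} (hq0 : 0 < q) (hq1 : q < 1) (z : ℝ) (N : ℕ) :
    Fq q z = (∏ k ∈ Finset.range N, (1 + q ^ k * z)) * Fq q (q ^ N * z) := by
  induction N with
  | zero => simp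
  | succ N ih =>
    rw [ih, Finset.prod_range_succ, funeq hq0 hq1 (q ^ N * z)]
    rw [show q * (q ^ N * z) = q ^ (N + 1) * z by ring]
    ring

lemma stmt15_term {q : ℝ} (hq0 : 0 < q) (hq1 : q < 1) (m n : ℕ) :
    q ^ (-(((m + n : ℕ) : ℝ)) ^ 2 / 2) *
      ((-1) ^ n * q ^ (((n : ℝ)) ^ 2 - (n : ℝ) / 2) /
        ∏ j ∈ Finset.range n, (1 - q ^ (j + 1)))
    = q ^ (-((m : ℝ)) ^ 2 / 2) * (aq q n * (-(q ^ (-(m : ℝ)))) ^ n) := by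
  have hP := Pq_pos hq0 hq1 n
  have hneg : (-(q ^ (-(m : ℝ)))) ^ n = (-1 : ℝ) ^ n * (q ^ (-(m : ℝ))) ^ n := neg_pow _ n
  have hzp : (q ^ (-(m : ℝ))) ^ n = q ^ ((-(m : ℝ)) * n) := by
    rw [← Real.rpow_natCast (q ^ (-(m : ℝ))) n, ← Real.rpow_mul hq0.le]
  have e1 : q ^ (-(((m + n : ℕ) : ℝ)) ^ 2 / 2) * q ^ (((n : ℝ)) ^ 2 - (n : ℝ) / 2)
      = q ^ (-((m : ℝ)) ^ 2 / 2) * (q ^ (((n : ℝ) * ((n : ℝ) - 1)) / 2) * q ^ ((-(m : ℝ)) * n)) := by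
    rw [← Real.rpow_add hq0, ← Real.rpow_add hq0, ← Real.rpow_add hq0]
    congr 1
    push_cast; ring
  rw [hneg, hzp, aq]
  rw [show (∏ j ∈ Finset.range n, (1 - q ^ (j + 1))) = Pq q n from rfl]
  calc q ^ (-(((m + n : ℕ) : ℝ)) ^ 2 / 2) *
        ((-1) ^ n * q ^ (((n : ℝ)) ^ 2 - (n : ℝ) / 2) / Pq q n)
      = (-1 : ℝ) ^ n * ((q ^ (-(((m + n : ℕ) : ℝ)) ^ 2 / 2) *
          q ^ (((n : ℝ)) ^ 2 - (n : ℝ) / 2)) / Pq q n) := by ring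
    _ = (-1 : ℝ) ^ n * ((q ^ (-((m : ℝ)) ^ 2 / 2) *
          (q ^ (((n : ℝ) * ((n : ℝ) - 1)) / 2) * q ^ ((-(m : ℝ)) * n))) / Pq q n) := by rw [e1]
    _ = q ^ (-((m : ℝ)) ^ 2 / 2) *
          (q ^ (((n : ℝ) * ((n : ℝ) - 1)) / 2) / Pq q n * ((-1) ^ n * q ^ ((-(m : ℝ)) * n))) := by
        ring

end Stmt15Aux

open Stmt15Aux Real Filter

theorem stmt15 (q : ℝ) (hq0 : 0 < q) (hq1 : q < 1) (m : ℕ) :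
    HasSum (fun n : ℕ => q ^ (-(((m + n : ℕ) : ℝ)) ^ 2 / 2) *
      ((-1) ^ n * q ^ (((n : ℝ)) ^ 2 - (n : ℝ) / 2) /
        ∏ j ∈ Finset.range n, (1 - q ^ (j + 1)))) 0 ∧
    HasSum (fun n : ℕ => q ^ (-(((m + n : ℕ) : ℝ)) ^ 2 / 2) *
      |(-1) ^ n * q ^ (((n : ℝ)) ^ 2 - (n : ℝ) / 2) /
        ∏ j ∈ Finset.range n, (1 - q ^ (j + 1))|)
      (q ^ (-((m : ℝ)) ^ 2 / 2) * ∏' j : ℕ, (1 + q ^ ((j : ℤ) - (m : ℤ)))) := by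
  set z : ℝ := q ^ (-(m : ℝ)) with hz
  have hzpos : 0 < z := Real.rpow_pos_of_pos hq0 _
  have hz1 : 1 ≤ z := Real.one_le_rpow_of_pos_of_le_one_of_nonpos hq0 hq1.le
    (by simp)
  set c : ℝ := q ^ (-((m : ℝ)) ^ 2 / 2) with hc
  have hcpos : 0 < c := Real.rpow_pos_of_pos hq0 _
  constructor
  · -- signed part
    have hFz : Fq q (-z) = 0 := by
      rw [funeq_iter hq0 hq1 (-z) (m + 1)]
      have hzero : (∏ k ∈ Finset.range (m + 1), (1 + q ^ k * (-z))) = 0 := by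
        apply Finset.prod_eq_zero (Finset.self_mem_range_succ m)
        have h1 : q ^ m * z = 1 := by
          rw [hz, ← Real.rpow_natCast q m, ← Real.rpow_add hq0]
          simp
        rw [mul_neg, h1]; ring
      rw [hzero, zero_mul]
    have h := hasSum_Fq hq0 hq1 (-z)
    rw [hFz] at h
    have h2 := h.mul_left c
    rw [mul_zero] at h2
    refine h2.congr_fun fun n => ?_
    rw [hz, hc]
    exact stmt15_term hq0 hq1 m n
  · -- absolute part
    have hF_ge1 : ∀ w : ℝ, 0 ≤ w → 1 ≤ Fq q w := by
      intro w hw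
      have h := hasSum_Fq hq0 hq1 w
      have := le_hasSum h 0 (fun j _ => by
        have := aq_pos hq0 hq1 j
        positivity)
      simpa [aq_zero] using this
    have hsum_shift : Summable fun n => aq q (n + 1) * z ^ n := by
      have h1 : Summable fun n => aq q (n + 1) * z ^ (n + 1) :=
        (summable_nat_add_iff 1).mpr (summable_aq hq0 hq1 z)
      refine Summable.of_nonneg_of_le (fun n => by
          have := aq_pos hq0 hq1 (n + 1); positivity) (fun n => ?_) h1
      have : z ^ n ≤ z ^ (n + 1) := pow_le_pow_right₀ hz1 (by omega)
      exact mul_le_mul_of_nonneg_left this (aq_pos hq0 hq1 _).le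
    set C : ℝ := ∑' n, aq q (n + 1) * z ^ n with hC
    have hFbound : ∀ N : ℕ, Fq q (q ^ N * z) ≤ 1 + q ^ N * z * C := by
      intro N
      set w : ℝ := q ^ N * z with hw
      have hwpos : 0 < w := by positivity
      have hwz : w ≤ z := by
        rw [hw]
        nlinarith [pow_le_one₀ hq0.le hq1.le (n := N), hzpos]
      have hsum_w : Summable fun n => aq q n * w ^ n := summable_aq hq0 hq1 w
      have hsplit := Summable.tsum_eq_zero_add hsum_w
      have h0 : aq q 0 * w ^ 0 = 1 := by simp [aq_zero]
      have hshift_w : Summable fun n => aq q (n + 1) * w ^ (n + 1) :=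
        (summable_nat_add_iff 1).mpr hsum_w
      have htail : (∑' n, aq q (n + 1) * w ^ (n + 1)) ≤ w * C := by
        have hRHS : Summable fun n => w * (aq q (n + 1) * z ^ n) := hsum_shift.mul_left w
        have hle : ∀ n, aq q (n + 1) * w ^ (n + 1) ≤ w * (aq q (n + 1) * z ^ n) := by
          intro n
          have hwn : w ^ n ≤ z ^ n := pow_le_pow_left₀ hwpos.le hwz n
          have h3 := mul_le_mul_of_nonneg_left hwn (aq_pos hq0 hq1 (n + 1)).le
          calc aq q (n + 1) * w ^ (n + 1) = w * (aq q (n + 1) * w ^ n) := by ring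
            _ ≤ w * (aq q (n + 1) * z ^ n) := by nlinarith
        calc (∑' n, aq q (n + 1) * w ^ (n + 1))
            ≤ ∑' n, w * (aq q (n + 1) * z ^ n) := Summable.tsum_le_tsum hle hshift_w hRHS
          _ = w * C := by rw [hC, tsum_mul_left]
      calc Fq q w = aq q 0 * w ^ 0 + ∑' n, aq q (n + 1) * w ^ (n + 1) := hsplit
        _ ≤ 1 + w * C := by rw [h0]; linarith
    have htendF : Tendsto (fun N : ℕ => Fq q (q ^ N * z)) atTop (nhds 1) := by
      have hlow : ∀ N : ℕ, 1 ≤ Fq q (q ^ N * z) := fun N => hF_ge1 _ (by positivity)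
      have hup : Tendsto (fun N : ℕ => 1 + q ^ N * z * C) atTop (nhds 1) := by
        have h1 : Tendsto (fun N : ℕ => q ^ N * z * C) atTop (nhds 0) := by
          have h2 := (tendsto_pow_atTop_nhds_zero_of_lt_one hq0.le hq1).mul_const z
          simpa using h2.mul_const C
        simpa using (tendsto_const_nhds (x := (1:ℝ))).add h1
      exact tendsto_of_tendsto_of_tendsto_of_le_of_le tendsto_const_nhds hup hlow hFbound
    have hprod_tend : Tendsto (fun N : ℕ => ∏ k ∈ Finset.range N, (1 + q ^ k * z))
        atTop (nhds (Fq q z)) := by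
      have heq : ∀ N : ℕ, (∏ k ∈ Finset.range N, (1 + q ^ k * z))
          = Fq q z / Fq q (q ^ N * z) := by
        intro N
        have hne : Fq q (q ^ N * z) ≠ 0 := by
          have := hF_ge1 (q ^ N * z) (by positivity); linarith
        rw [funeq_iter hq0 hq1 z N]
        rw [mul_div_assoc, div_self hne, mul_one]
      have hdiv : Tendsto (fun N : ℕ => Fq q z / Fq q (q ^ N * z)) atTop
          (nhds (Fq q z / 1)) :=
        Tendsto.div tendsto_const_nhds htendF one_ne_zero
      rw [div_one] at hdiv
      exact hdiv.congr fun N => (heq N).symm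
    have hfactor : ∀ j : ℕ, (1 : ℝ) + q ^ ((j : ℤ) - (m : ℤ)) = 1 + q ^ j * z := by
      intro j
      rw [zpow_sub₀ hq0.ne', zpow_natCast, zpow_natCast, hz, Real.rpow_neg hq0.le,
        Real.rpow_natCast, div_eq_mul_inv]
    have hlog : Summable fun j : ℕ => Real.log (1 + q ^ j * z) := by
      refine Summable.of_nonneg_of_le (fun j => Real.log_nonneg ?_)
        (fun j => ?_) ((summable_geometric_of_lt_one hq0.le hq1).mul_right z)
      · nlinarith [pow_pos hq0 j]
      · have := Real.log_le_sub_one_of_pos (x := 1 + q ^ j * z) (by positivity)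
        linarith
    have hmult : Multipliable fun j : ℕ => 1 + q ^ j * z := by
      exact Real.multipliable_of_summable_log
        (fun j => show (0:ℝ) < 1 + q ^ j * z by positivity) hlog
    have hP := hmult.hasProd
    have hPt := hP.tendsto_prod_nat
    have hprod_eq : (∏' j : ℕ, (1 + q ^ j * z)) = Fq q z :=
      tendsto_nhds_unique hPt hprod_tend
    have htarget : (∏' j : ℕ, ((1:ℝ) + q ^ ((j : ℤ) - (m : ℤ)))) = Fq q z := by
      rw [tprod_congr hfactor, hprod_eq]
    rw [htarget]
    have h := (hasSum_Fq hq0 hq1 z).mul_left c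
    refine h.congr_fun fun n => ?_
    have hterm := stmt15_term hq0 hq1 m n
    have habs : q ^ (-(((m + n : ℕ) : ℝ)) ^ 2 / 2) *
        |(-1) ^ n * q ^ (((n : ℝ)) ^ 2 - (n : ℝ) / 2) /
          ∏ j ∈ Finset.range n, (1 - q ^ (j + 1))|
        = |q ^ (-(((m + n : ℕ) : ℝ)) ^ 2 / 2) *
          ((-1) ^ n * q ^ (((n : ℝ)) ^ 2 - (n : ℝ) / 2) /
            ∏ j ∈ Finset.range n, (1 - q ^ (j + 1)))| := by
      rw [abs_mul, abs_of_pos (Real.rpow_pos_of_pos hq0 _)]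
    rw [hz, hc] at *
    rw [habs, hterm, abs_mul, abs_mul, abs_of_pos (Real.rpow_pos_of_pos hq0 _),
      abs_of_pos (aq_pos hq0 hq1 n), abs_pow, abs_neg,
      abs_of_pos (Real.rpow_pos_of_pos hq0 _)]
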